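/- Consider uplink NOMA with K ≥ 1 devices: B > 0, σ² > 0, g_k > 0 and q_k^max > 0 for all k, and a fixed permutation π giving the SIC decoding order. For θ ≥ 0 define q'_k(θ) by the backward recursion q'_k(θ) = (2^{θ/B} − 1)·(σ²·B + Σ_{j : π_j > π_k} g_j·q_j^max·q'_j(θ))/(g_k·q_k^max). Then for every k the function θ ↦ q'_k(θ) is strictly increasing on [0, ∞) with q'_k(0) = 0; consequently, for each k the set {θ ≥ 0 : q'_k(θ) ≤ 1} is an interval containing 0, so the feasibility condition q'(θ) ∈ [0,1]^K is monotone in θ (justifying the bisection search for the optimal θ in Algorithm 3). -/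

import Mathlib

open Finset

private lemma stmt16_card_lt {K : ℕ} (π : Equiv.Perm (Fin K)) {k j : Fin K}
    (hj : π k < π j) :
    (univ.filter (fun m => π j < π m)).card < (univ.filter (fun m => π k < π m)).card := by
  apply Finset.card_lt_card
  constructor
  · intro m hm
    simp only [mem_filter, mem_univ, true_and] at *
    exact hj.trans hm
  · intro hsub
    have hjk : j ∈ univ.filter (fun m => π k < π m) := by simp [hj]
    have := hsub hjk
    simp at this

private lemma stmt16_one_le {B θ : ℝ} (hB : 0 < B) (hθ : 0 ≤ θ) :
    (1 : ℝ) ≤ (2 : ℝ) ^ (θ / B) := by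
  have := Real.rpow_le_rpow_of_exponent_le (one_le_two)
    (div_nonneg hθ hB.le : (0:ℝ) ≤ θ / B)
  simpa using this

private lemma stmt16_nonneg {K : ℕ} {B σ2 : ℝ} (hB : 0 < B) (hσ2 : 0 < σ2)
    {g qmax : Fin K → ℝ} (hg : ∀ k, 0 < g k) (hqmax : ∀ k, 0 < qmax k)
    (π : Equiv.Perm (Fin K)) {θ : ℝ} (hθ : 0 ≤ θ) {q : Fin K → ℝ}
    (hq : ∀ k, q k = ((2 : ℝ) ^ (θ / B) - 1) *
        (σ2 * B + ∑ j ∈ univ.filter (fun j => π k < π j), g j * qmax j * q j)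
        / (g k * qmax k)) :
    ∀ k, 0 ≤ q k := by
  have H : ∀ n : ℕ, ∀ k, (univ.filter (fun j => π k < π j)).card = n → 0 ≤ q k := by
    intro n
    induction n using Nat.strong_induction_on with
    | _ n ih =>
      intro k hk
      rw [hq k]
      apply div_nonneg _ (mul_nonneg (hg k).le (hqmax k).le)
      apply mul_nonneg (by linarith [stmt16_one_le hB hθ])
      have hsum : 0 ≤ ∑ j ∈ univ.filter (fun j => π k < π j), g j * qmax j * q j := by
        apply Finset.sum_nonneg
        intro j hj
        simp only [mem_filter, mem_univ, true_and] at hj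
        have := ih _ (hk ▸ stmt16_card_lt π hj) j rfl
        exact mul_nonneg (mul_nonneg (hg j).le (hqmax j).le) this
      nlinarith
  intro k; exact H _ k rfl

private lemma stmt16_mono {K : ℕ} {B σ2 : ℝ} (hB : 0 < B) (hσ2 : 0 < σ2)
    {g qmax : Fin K → ℝ} (hg : ∀ k, 0 < g k) (hqmax : ∀ k, 0 < qmax k)
    (π : Equiv.Perm (Fin K)) {θ₁ θ₂ : ℝ} (hθ1 : 0 ≤ θ₁) (h12 : θ₁ ≤ θ₂)
    {q₁ q₂ : Fin K → ℝ}
    (hq1 : ∀ k, q₁ k = ((2 : ℝ) ^ (θ₁ / B) - 1) *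
        (σ2 * B + ∑ j ∈ univ.filter (fun j => π k < π j), g j * qmax j * q₁ j)
        / (g k * qmax k))
    (hq2 : ∀ k, q₂ k = ((2 : ℝ) ^ (θ₂ / B) - 1) *
        (σ2 * B + ∑ j ∈ univ.filter (fun j => π k < π j), g j * qmax j * q₂ j)
        / (g k * qmax k)) :
    ∀ k, q₁ k ≤ q₂ k := by
  have hθ2 : 0 ≤ θ₂ := hθ1.trans h12
  have hn1 := stmt16_nonneg hB hσ2 hg hqmax π hθ1 hq1
  have hn2 := stmt16_nonneg hB hσ2 hg hqmax π hθ2 hq2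
  have hc1 : (0:ℝ) ≤ (2 : ℝ) ^ (θ₁ / B) - 1 := by linarith [stmt16_one_le hB hθ1]
  have hc12 : (2 : ℝ) ^ (θ₁ / B) - 1 ≤ (2 : ℝ) ^ (θ₂ / B) - 1 := by
    have := Real.rpow_le_rpow_of_exponent_le (one_le_two)
      (div_le_div_of_nonneg_right h12 hB.le : θ₁ / B ≤ θ₂ / B)
    linarith
  have H : ∀ n : ℕ, ∀ k, (univ.filter (fun j => π k < π j)).card = n → q₁ k ≤ q₂ k := by
    intro n
    induction n using Nat.strong_induction_on with
    | _ n ih =>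
      intro k hk
      rw [hq1 k, hq2 k]
      apply div_le_div_of_nonneg_right _ (mul_pos (hg k) (hqmax k)).le
      have hS : (σ2 * B + ∑ j ∈ univ.filter (fun j => π k < π j), g j * qmax j * q₁ j)
          ≤ (σ2 * B + ∑ j ∈ univ.filter (fun j => π k < π j), g j * qmax j * q₂ j) := by
        apply add_le_add_right
        apply Finset.sum_le_sum
        intro j hj
        simp only [mem_filter, mem_univ, true_and] at hj
        exact mul_le_mul_of_nonneg_left (ih _ (hk ▸ stmt16_card_lt π hj) j rfl)
          (mul_nonneg (hg j).le (hqmax j).le)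
      have hS1 : 0 ≤ σ2 * B + ∑ j ∈ univ.filter (fun j => π k < π j), g j * qmax j * q₁ j := by
        have : 0 ≤ ∑ j ∈ univ.filter (fun j => π k < π j), g j * qmax j * q₁ j :=
          Finset.sum_nonneg fun j hj =>
            mul_nonneg (mul_nonneg (hg j).le (hqmax j).le) (hn1 j)
        nlinarith
      exact mul_le_mul hc12 hS hS1 (by linarith)
  intro k; exact H _ k rfl

open Finset in
theorem stmt_16
    (K : ℕ) (hK : 1 ≤ K)
    (B σ2 : ℝ) (hB : 0 < B) (hσ2 : 0 < σ2)
    (g qmax : Fin K → ℝ) (hg : ∀ k, 0 < g k) (hqmax : ∀ k, 0 < qmax k)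
    (π : Equiv.Perm (Fin K)) :
    (∀ θ₁ θ₂ : ℝ, 0 ≤ θ₁ → θ₁ < θ₂ →
      ∀ q₁ q₂ : Fin K → ℝ,
      (∀ k, q₁ k = ((2 : ℝ) ^ (θ₁ / B) - 1) *
        (σ2 * B + ∑ j ∈ univ.filter (fun j => π k < π j), g j * qmax j * q₁ j)
        / (g k * qmax k)) →
      (∀ k, q₂ k = ((2 : ℝ) ^ (θ₂ / B) - 1) *
        (σ2 * B + ∑ j ∈ univ.filter (fun j => π k < π j), g j * qmax j * q₂ j)
        / (g k * qmax k)) →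
      ∀ k, q₁ k < q₂ k) ∧
    (∀ q₀ : Fin K → ℝ,
      (∀ k, q₀ k = ((2 : ℝ) ^ ((0 : ℝ) / B) - 1) *
        (σ2 * B + ∑ j ∈ univ.filter (fun j => π k < π j), g j * qmax j * q₀ j)
        / (g k * qmax k)) →
      ∀ k, q₀ k = 0) ∧
    (∀ θ₁ θ₂ : ℝ, 0 ≤ θ₁ → θ₁ ≤ θ₂ →
      ∀ q₁ q₂ : Fin K → ℝ,
      (∀ k, q₁ k = ((2 : ℝ) ^ (θ₁ / B) - 1) *
        (σ2 * B + ∑ j ∈ univ.filter (fun j => π k < π j), g j * qmax j * q₁ j)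
        / (g k * qmax k)) →
      (∀ k, q₂ k = ((2 : ℝ) ^ (θ₂ / B) - 1) *
        (σ2 * B + ∑ j ∈ univ.filter (fun j => π k < π j), g j * qmax j * q₂ j)
        / (g k * qmax k)) →
      (∀ k, q₂ k ≤ 1) → ∀ k, q₁ k ≤ 1) := by
  refine ⟨?_, ?_, ?_⟩
  · intro θ₁ θ₂ hθ1 h12 q₁ q₂ hq1 hq2 k
    have hθ2 : 0 ≤ θ₂ := hθ1.trans h12.le
    have hmono := stmt16_mono hB hσ2 hg hqmax π hθ1 h12.le hq1 hq2
    have hn1 := stmt16_nonneg hB hσ2 hg hqmax π hθ1 hq1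
    have hc1 : (0:ℝ) ≤ (2 : ℝ) ^ (θ₁ / B) - 1 := by linarith [stmt16_one_le hB hθ1]
    have hc12 : (2 : ℝ) ^ (θ₁ / B) - 1 < (2 : ℝ) ^ (θ₂ / B) - 1 := by
      have := Real.rpow_lt_rpow_of_exponent_lt (one_lt_two)
        (div_lt_div_of_pos_right h12 hB : θ₁ / B < θ₂ / B)
      linarith
    rw [hq1 k, hq2 k]
    apply div_lt_div_of_pos_right _ (mul_pos (hg k) (hqmax k))
    have hS : (σ2 * B + ∑ j ∈ univ.filter (fun j => π k < π j), g j * qmax j * q₁ j)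
        ≤ (σ2 * B + ∑ j ∈ univ.filter (fun j => π k < π j), g j * qmax j * q₂ j) := by
      apply add_le_add_right
      exact Finset.sum_le_sum fun j hj =>
        mul_le_mul_of_nonneg_left (hmono j) (mul_nonneg (hg j).le (hqmax j).le)
    have hS1 : 0 < σ2 * B + ∑ j ∈ univ.filter (fun j => π k < π j), g j * qmax j * q₁ j := by
      have : 0 ≤ ∑ j ∈ univ.filter (fun j => π k < π j), g j * qmax j * q₁ j :=
        Finset.sum_nonneg fun j hj =>
          mul_nonneg (mul_nonneg (hg j).le (hqmax j).le) (hn1 j)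
      nlinarith
    calc ((2:ℝ) ^ (θ₁ / B) - 1) * (σ2 * B + ∑ j ∈ univ.filter (fun j => π k < π j), g j * qmax j * q₁ j)
        ≤ ((2:ℝ) ^ (θ₁ / B) - 1) * (σ2 * B + ∑ j ∈ univ.filter (fun j => π k < π j), g j * qmax j * q₂ j) :=
          mul_le_mul_of_nonneg_left hS hc1
      _ < ((2:ℝ) ^ (θ₂ / B) - 1) * (σ2 * B + ∑ j ∈ univ.filter (fun j => π k < π j), g j * qmax j * q₂ j) := by
          apply mul_lt_mul_of_pos_right hc12
          linarith [hS, hS1]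
  · intro q₀ hq0 k
    have := hq0 k
    simpa using this
  · intro θ₁ θ₂ hθ1 h12 q₁ q₂ hq1 hq2 hle k
    exact (stmt16_mono hB hσ2 hg hqmax π hθ1 h12 hq1 hq2 k).trans (hle k)
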